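/- Let (S_n)_{n≥1} be a demimartingale with E[τ] < ∞ for a stopping time τ whose indicators I{τ ≤ j} are componentwise nondecreasing functions of S_1,...,S_j, and suppose the increments satisfy |S_k − S_{k−1}| ≤ M for all k ≥ 2 and some M > 0. Then E[S_τ] ≤ E[S_1]. -/

import Mathlib

open MeasureTheory Real

/-- A sequence `S 1, S 2, ...` of integrable random variables is a *demimartingale* if
`E[(S (j+1) - S j) * f (S 1, ..., S j)] ≥ 0` for every componentwise nondecreasing `f`
whenever the expectation is defined. -/
def IsDemimartingale {Ω : Type*} [MeasurableSpace Ω] (μ : Measure Ω) (S : ℕ → Ω → ℝ) : Prop :=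
  (∀ n, 1 ≤ n → Integrable (S n) μ) ∧
  ∀ (j : ℕ), 1 ≤ j → ∀ f : (Fin j → ℝ) → ℝ, Monotone f →
    Integrable (fun ω => (S (j + 1) ω - S j ω) * f (fun i => S (i.val + 1) ω)) μ →
    0 ≤ ∫ ω, (S (j + 1) ω - S j ω) * f (fun i => S (i.val + 1) ω) ∂μ

/-- A sequence `S 1, S 2, ...` of integrable random variables is a *demisubmartingale* if
`E[(S (j+1) - S j) * f (S 1, ..., S j)] ≥ 0` for every nonnegative componentwise
nondecreasing `f` whenever the expectation is defined. -/
def IsDemisubmartingale {Ω : Type*} [MeasurableSpace Ω] (μ : Measure Ω) (S : ℕ → Ω → ℝ) : Prop :=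
  (∀ n, 1 ≤ n → Integrable (S n) μ) ∧
  ∀ (j : ℕ), 1 ≤ j → ∀ f : (Fin j → ℝ) → ℝ, Monotone f → (∀ x, 0 ≤ f x) →
    Integrable (fun ω => (S (j + 1) ω - S j ω) * f (fun i => S (i.val + 1) ω)) μ →
    0 ≤ ∫ ω, (S (j + 1) ω - S j ω) * f (fun i => S (i.val + 1) ω) ∂μ

/-- A sequence `X 1, X 2, ...` is *positively associated* if every finite collection
`X 1, ..., X n` satisfies `Cov (f (X 1,...,X n), g (X 1,...,X n)) ≥ 0` for all
componentwise nondecreasing `f`, `g` for which the covariance is defined. -/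
def PositivelyAssociated {Ω : Type*} [MeasurableSpace Ω] (μ : Measure Ω) (X : ℕ → Ω → ℝ) : Prop :=
  ∀ (n : ℕ) (f g : (Fin n → ℝ) → ℝ), Monotone f → Monotone g →
    Integrable (fun ω => f (fun i => X (i.val + 1) ω)) μ →
    Integrable (fun ω => g (fun i => X (i.val + 1) ω)) μ →
    Integrable (fun ω => f (fun i => X (i.val + 1) ω) * g (fun i => X (i.val + 1) ω)) μ →
    (∫ ω, f (fun i => X (i.val + 1) ω) ∂μ) * (∫ ω, g (fun i => X (i.val + 1) ω) ∂μ)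
      ≤ ∫ ω, f (fun i => X (i.val + 1) ω) * g (fun i => X (i.val + 1) ω) ∂μ

/-- Optional sampling for a demimartingale with bounded increments and a stopping time of
finite expectation whose indicators `I{τ ≤ j}` are componentwise nondecreasing functions of
`S 1, ..., S j`: `E[S τ] ≤ E[S 1]`. -/
theorem stmt_7 {Ω : Type*} [MeasurableSpace Ω] (μ : Measure Ω) [IsProbabilityMeasure μ]
    (S : ℕ → Ω → ℝ) (hS : IsDemimartingale μ S)
    (M : ℝ) (hM : 0 < M)
    (hinc : ∀ k, 2 ≤ k → ∀ ω, |S k ω - S (k - 1) ω| ≤ M)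
    (τ : Ω → ℕ) (hτ1 : ∀ ω, 1 ≤ τ ω)
    (hτint : Integrable (fun ω => (τ ω : ℝ)) μ)
    (hind : ∀ j, 1 ≤ j →
      ∃ h : (Fin j → ℝ) → ℝ, Monotone h ∧
        ∀ ω, (if τ ω ≤ j then (1 : ℝ) else 0) = h (fun i => S (i.val + 1) ω)) :
    ∫ ω, S (τ ω) ω ∂μ ≤ ∫ ω, S 1 ω ∂μ := by
  classical
  -- τ is a.e. measurable
  have hτm : AEMeasurable τ μ := by
    obtain ⟨g, hg, hge⟩ := hτint.aestronglyMeasurable.aemeasurable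
    refine ⟨fun ω => ⌊g ω⌋₊, hg.nat_floor, ?_⟩
    filter_upwards [hge] with ω hω
    simp [← hω]
  -- indicator of {τ ≤ j} is a.e. measurable
  have hindm : ∀ j : ℕ, AEMeasurable (fun ω => if τ ω ≤ j then (1:ℝ) else 0) μ := by
    intro j
    exact (measurable_from_top (f := fun t : ℕ => if t ≤ j then (1:ℝ) else 0)).comp_aemeasurable
      hτm
  -- the increment terms of the stopped process
  set D : ℕ → Ω → ℝ := fun j ω => if τ ω ≤ j then (0:ℝ) else S (j+1) ω - S j ω with hD
  -- increments bounded by M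
  have hDbd : ∀ j, 1 ≤ j → ∀ ω, |D j ω| ≤ M := by
    intro j hj ω
    by_cases h : τ ω ≤ j
    · simp [hD, h, hM.le]
    · have := hinc (j+1) (by omega) ω
      simpa [hD, h] using this
  -- measurability of increments
  have hDm : ∀ j, 1 ≤ j → AEStronglyMeasurable (D j) μ := by
    intro j hj
    have heq : D j = fun ω => (if τ ω ≤ j then (1:ℝ) else 0) * 0 +
        (1 - (if τ ω ≤ j then (1:ℝ) else 0)) * (S (j+1) ω - S j ω) := by
      funext ω
      by_cases h : τ ω ≤ j <;> simp [hD, h]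
    rw [heq]
    exact (((hindm j).mul aemeasurable_const).add
      (((aemeasurable_const.sub (hindm j)).mul
        (((hS.1 (j+1) (by omega)).sub (hS.1 j hj)).aemeasurable)))).aestronglyMeasurable
  -- integrability of increments
  have hDint : ∀ j, 1 ≤ j → Integrable (D j) μ := by
    intro j hj
    refine Integrable.mono' (integrable_const M) (hDm j hj) ?_
    filter_upwards with ω
    simpa [Real.norm_eq_abs] using hDbd j hj ω
  -- each increment has nonpositive expectation
  have hDle : ∀ j, 1 ≤ j → ∫ ω, D j ω ∂μ ≤ 0 := by
    intro j hj
    have hsub : Integrable (fun ω => S (j+1) ω - S j ω) μ :=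
      (hS.1 (j+1) (by omega)).sub (hS.1 j hj)
    -- E[S_{j+1} - S_j] = 0
    have e0 : ∫ ω, (S (j+1) ω - S j ω) ∂μ = 0 := by
      have h1 := hS.2 j hj (fun _ => (1:ℝ)) monotone_const (by simpa using hsub)
      have h2 := hS.2 j hj (fun _ => (-1:ℝ)) monotone_const
        (by simp; exact (hS.1 j hj).sub (hS.1 (j+1) (by omega)))
      simp only [mul_one, mul_neg_one] at h1 h2
      rw [integral_neg] at h2
      linarith
    -- E[(S_{j+1}-S_j) 1_{τ ≤ j}] ≥ 0
    obtain ⟨h, hmono, heq⟩ := hind j hj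
    have hfun : (fun ω => (S (j + 1) ω - S j ω) * h (fun i => S (i.val + 1) ω))
        = fun ω => (S (j+1) ω - S j ω) * (if τ ω ≤ j then (1:ℝ) else 0) := by
      funext ω; rw [← heq ω]
    have hintmul : Integrable
        (fun ω => (S (j+1) ω - S j ω) * (if τ ω ≤ j then (1:ℝ) else 0)) μ := by
      refine Integrable.mono' (integrable_const M)
        (hsub.aemeasurable.mul (hindm j)).aestronglyMeasurable ?_
      filter_upwards with ω
      rw [Real.norm_eq_abs, abs_mul]
      by_cases hc : τ ω ≤ j
      · have := hinc (j+1) (by omega) ω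
        simp only [hc, if_true, abs_one, mul_one]
        simpa using this
      · simp [hc, hM.le]
    have e1 : 0 ≤ ∫ ω, (S (j+1) ω - S j ω) * (if τ ω ≤ j then (1:ℝ) else 0) ∂μ := by
      have := hS.2 j hj h hmono (by rw [hfun]; exact hintmul)
      rwa [hfun] at this
    -- D j = (S_{j+1}-S_j) - (S_{j+1}-S_j) 1_{τ≤j}
    have hdecomp : D j = fun ω => (S (j+1) ω - S j ω) -
        (S (j+1) ω - S j ω) * (if τ ω ≤ j then (1:ℝ) else 0) := by
      funext ω; by_cases hc : τ ω ≤ j <;> simp [hD, hc]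
    rw [hdecomp]
    rw [integral_sub hsub hintmul, e0]
    linarith
  -- stopped process
  set F : ℕ → Ω → ℝ := fun n ω => S 1 ω + ∑ j ∈ Finset.Ico 1 n, D j ω with hF
  -- key identity: F n ω = S (min (τ ω) n) ω for n ≥ 1
  have hkey : ∀ ω, ∀ n, 1 ≤ n → S (min (τ ω) n) ω = F n ω := by
    intro ω n hn
    induction n, hn using Nat.le_induction with
    | base => simp [hF, min_eq_right (hτ1 ω)]
    | succ n hn ih =>
      have hsum : F (n+1) ω = F n ω + D n ω := by
        simp [hF, Finset.sum_Ico_succ_top hn, add_assoc]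
      rw [hsum, ← ih]
      by_cases hc : τ ω ≤ n
      · have h1 : min (τ ω) (n+1) = τ ω := min_eq_left (by omega)
        have h2 : min (τ ω) n = τ ω := min_eq_left hc
        simp [h1, h2, hD, hc]
      · have h1 : min (τ ω) (n+1) = n+1 := min_eq_right (by omega)
        have h2 : min (τ ω) n = n := min_eq_right (by omega)
        simp only [h1, h2, hD, hc, if_false]
        ring
  -- each F n is integrable
  have hFint : ∀ n, Integrable (F n) μ := by
    intro n
    exact (hS.1 1 le_rfl).add (integrable_finset_sum _ fun j hj =>
      hDint j (Finset.mem_Ico.mp hj).1)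
  -- ∫ F n ≤ ∫ S 1
  have hFle : ∀ n, ∫ ω, F n ω ∂μ ≤ ∫ ω, S 1 ω ∂μ := by
    intro n
    rw [hF]
    rw [integral_add (hS.1 1 le_rfl) (integrable_finset_sum _ fun j hj =>
      hDint j (Finset.mem_Ico.mp hj).1)]
    have : ∫ ω, ∑ j ∈ Finset.Ico 1 n, D j ω ∂μ ≤ 0 := by
      rw [integral_finset_sum _ fun j hj => hDint j (Finset.mem_Ico.mp hj).1]
      exact Finset.sum_nonpos fun j hj => hDle j (Finset.mem_Ico.mp hj).1
    linarith
  -- domination: |F n ω| ≤ |S 1 ω| + M * τ ω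
  have hbound : ∀ n, ∀ ω, ‖F n ω‖ ≤ |S 1 ω| + M * τ ω := by
    intro n ω
    rw [Real.norm_eq_abs, hF]
    refine le_trans (abs_add_le _ _) (add_le_add le_rfl ?_)
    refine le_trans (Finset.abs_sum_le_sum_abs _ _) ?_
    have step1 : ∑ j ∈ Finset.Ico 1 n, |D j ω| ≤
        ∑ j ∈ Finset.Ico 1 n, (if τ ω ≤ j then (0:ℝ) else M) := by
      refine Finset.sum_le_sum fun j hj => ?_
      by_cases hc : τ ω ≤ j
      · simp [hD, hc]
      · simp only [hc, if_false]
        exact le_trans le_rfl (by simpa [hD, hc] using hDbd j (Finset.mem_Ico.mp hj).1 ω)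
    refine le_trans step1 ?_
    have step2 : ∑ j ∈ Finset.Ico 1 n, (if τ ω ≤ j then (0:ℝ) else M)
        = ∑ j ∈ (Finset.Ico 1 n).filter (fun j => ¬ τ ω ≤ j), M := by
      rw [Finset.sum_filter]
      refine Finset.sum_congr rfl fun j _ => ?_
      by_cases hc : τ ω ≤ j <;> simp [hc]
    rw [step2]
    have hsubset : (Finset.Ico 1 n).filter (fun j => ¬ τ ω ≤ j) ⊆ Finset.Ico 1 (τ ω) := by
      intro j hj
      rw [Finset.mem_filter, Finset.mem_Ico] at hj
      rw [Finset.mem_Ico]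
      exact ⟨hj.1.1, by omega⟩
    calc ∑ j ∈ (Finset.Ico 1 n).filter (fun j => ¬ τ ω ≤ j), M
        ≤ ∑ _j ∈ Finset.Ico 1 (τ ω), M :=
          Finset.sum_le_sum_of_subset_of_nonneg hsubset (fun _ _ _ => hM.le)
      _ = (τ ω - 1 : ℕ) * M := by rw [Finset.sum_const, Nat.card_Ico, nsmul_eq_mul]
      _ ≤ (τ ω : ℝ) * M := by
          refine mul_le_mul_of_nonneg_right ?_ hM.le
          exact_mod_cast Nat.sub_le _ _
      _ = M * τ ω := mul_comm _ _
  -- dominated convergence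
  have hlim : ∀ ω, Filter.Tendsto (fun n => F n ω) Filter.atTop (nhds (S (τ ω) ω)) := by
    intro ω
    refine Filter.Tendsto.congr' ?_ tendsto_const_nhds
    rw [Filter.EventuallyEq, Filter.eventually_atTop]
    refine ⟨τ ω, fun n hn => ?_⟩
    have := hkey ω n (le_trans (hτ1 ω) hn)
    rw [← this, min_eq_left hn]
  have hbint : Integrable (fun ω => |S 1 ω| + M * τ ω) μ :=
    (hS.1 1 le_rfl).abs.add (hτint.const_mul M)
  have htend : Filter.Tendsto (fun n => ∫ ω, F n ω ∂μ) Filter.atTop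
      (nhds (∫ ω, S (τ ω) ω ∂μ)) := by
    refine tendsto_integral_of_dominated_convergence _ (fun n => (hFint n).aestronglyMeasurable)
      hbint (fun n => Filter.Eventually.of_forall (hbound n))
      (Filter.Eventually.of_forall hlim)
  exact le_of_tendsto htend (Filter.Eventually.of_forall hFle)
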